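/- Let F1, F2, F3 be consecutive fragments with |F1| = |F3| ≤ |F2|/8 and suppose F2 is periodic. Then every highly periodic pattern P (per(P) ≤ |P|/4) with an occurrence starting in F1 and ending in F3 satisfies per(P) = per(F2), and the occurrence is contained in the run of T extending F2 with period per(F2). -/
import Mathlib


/-- `p` is a period of the string (list) `S`. -/
def IsPeriod {α : Type*} (S : List α) (p : ℕ) : Prop :=
  0 < p ∧ ∀ i, i + p < S.length → S[i]? = S[i + p]?

/-- The smallest period of `S`. -/
noncomputable def minPeriod {α : Type*} (S : List α) : ℕ :=
  sInf {p | IsPeriod S p}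

/-- `P` occurs in `S` at (0-indexed) position `i`. -/
def OccursAt {α : Type*} (P S : List α) (i : ℕ) : Prop :=
  (S.drop i).take P.length = P ∧ i + P.length ≤ S.length

/-- The fragment `T[a..b]` (0-indexed, inclusive). -/
def frag {α : Type*} (T : List α) (a b : ℕ) : List α :=
  (T.drop a).take (b + 1 - a)

/-- `T[a..b]` is a run (maximal periodic fragment) of `T`. -/
def IsRun {α : Type*} (T : List α) (a b : ℕ) : Prop :=
  a ≤ b ∧ b < T.length ∧
  2 * minPeriod (frag T a b) ≤ b + 1 - a ∧
  (a = 0 ∨ T[a - 1]? ≠ T[a - 1 + minPeriod (frag T a b)]?) ∧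
  (b + 1 = T.length ∨ T[b + 1]? ≠ T[b + 1 - minPeriod (frag T a b)]?)

/-- The occurrence of the square `U · U` at position `s` of `T` is induced by the run `T[a..b]`. -/
def InducedOcc {α : Type*} (T U : List α) (s a b : ℕ) : Prop :=
  U ≠ [] ∧ IsRun T a b ∧ OccursAt (U ++ U) T s ∧ a ≤ s ∧
  s + 2 * U.length ≤ b + 1 ∧ minPeriod U = minPeriod (frag T a b)

/-- The `k`-th power `V^k` of a string `V`. -/
def listPow {α : Type*} (V : List α) (k : ℕ) : List α :=
  (List.replicate k V).flatten

private lemma isPeriod_length' {α : Type*} {S : List α} (h : S ≠ []) : IsPeriod S S.length :=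
  ⟨List.length_pos_iff.2 h, fun i hi => absurd hi (by omega)⟩

private lemma minPeriod_isPeriod {α : Type*} {S : List α} (h : S ≠ []) :
    IsPeriod S (minPeriod S) := by
  have h1 : S.length ∈ {p | IsPeriod S p} := isPeriod_length' h
  exact Nat.sInf_mem ⟨_, h1⟩

private lemma minPeriod_le {α : Type*} {S : List α} {p : ℕ} (h : IsPeriod S p) :
    minPeriod S ≤ p :=
  Nat.sInf_le h

private lemma period_steps {α : Type*} {S : List α} {p : ℕ} (h : IsPeriod S p) (k : ℕ) :
    ∀ i, i + k * p < S.length → S[i]? = S[i + k * p]? := by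
  induction k with
  | zero => simp
  | succ n ih =>
    intro i hi
    have e : (n + 1) * p = n * p + p := by ring
    rw [e] at hi
    calc S[i]? = S[i + p]? := h.2 i (by omega)
    _ = S[i + p + n * p]? := ih (i + p) (by omega)
    _ = S[i + (n + 1) * p]? := by rw [show i + p + n * p = i + (n + 1) * p by ring]

private lemma period_mod {α : Type*} {S : List α} {p : ℕ} (h : IsPeriod S p) {a b : ℕ}
    (hab : a ≤ b) (hb : b < S.length) (hm : a % p = b % p) : S[a]? = S[b]? := by
  obtain ⟨c, hc⟩ := (Nat.modEq_iff_dvd' hab).1 hm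
  have hc' : b = a + c * p := by rw [Nat.mul_comm c p]; omega
  have hlt : a + c * p < S.length := by rw [← hc']; exact hb
  rw [hc']
  exact period_steps h c a hlt

private lemma frag_getElem? {α : Type*} (T : List α) (a b k : ℕ) (hk : k < b + 1 - a) :
    (frag T a b)[k]? = T[a + k]? := by
  unfold frag
  rw [List.getElem?_take, if_pos hk, List.getElem?_drop]

private lemma frag_length {α : Type*} (T : List α) (a b : ℕ) (hb : b < T.length) (hab : a ≤ b) :
    (frag T a b).length = b + 1 - a := by
  unfold frag
  rw [List.length_take, List.length_drop]
  omega

/-- Consecutive fragments `F1 = T[i..i+x-1]`, `F2 = T[i+x..i+x+y-1]`,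
`F3 = T[i+x+y..i+2x+y-1]` with `8x ≤ y` and `F2` periodic: every highly periodic
pattern `P` with an occurrence starting in `F1` and ending in `F3` satisfies
`per(P) = per(F2)`, and the occurrence is contained in a run of `T` extending `F2`
with period `per(F2)`. -/
theorem stmt16 {α : Type*} (T P : List α) (i x y : ℕ)
    (hy0 : 0 < y) (hx8 : 8 * x ≤ y) (hrange : i + 2 * x + y ≤ T.length)
    (hF2per : 2 * minPeriod (frag T (i + x) (i + x + y - 1)) ≤ y)
    (hP : P ≠ []) (hhp : 4 * minPeriod P ≤ P.length)
    (s : ℕ) (hocc : OccursAt P T s)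
    (hs1 : i ≤ s) (hs2 : s < i + x)
    (he1 : i + x + y < s + P.length) (he2 : s + P.length ≤ i + 2 * x + y) :
    minPeriod P = minPeriod (frag T (i + x) (i + x + y - 1)) ∧
    ∃ a b, IsRun T a b ∧
      minPeriod (frag T a b) = minPeriod (frag T (i + x) (i + x + y - 1)) ∧
      a ≤ i + x ∧ i + x + y ≤ b + 1 ∧ a ≤ s ∧ s + P.length ≤ b + 1 := by
  set q := minPeriod (frag T (i + x) (i + x + y - 1)) with hqdef
  obtain ⟨htake, hlen⟩ := hocc
  have hP0 : 0 < P.length := List.length_pos_iff.2 hP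
  have hPT : ∀ k, k < P.length → P[k]? = T[s + k]? := by
    intro k hk
    conv_lhs => rw [← htake]
    rw [List.getElem?_take, if_pos hk, List.getElem?_drop]
  have hylen : i + x + y - 1 < T.length := by omega
  have hF2len : (frag T (i + x) (i + x + y - 1)).length = y := by
    rw [frag_length _ _ _ hylen (by omega)]; omega
  have hF2ne : frag T (i + x) (i + x + y - 1) ≠ [] := by
    intro h; rw [h] at hF2len; simp at hF2len; omega
  have hF2chr : ∀ k, k < y → (frag T (i + x) (i + x + y - 1))[k]? = T[i + x + k]? := by
    intro k hk; exact frag_getElem? _ _ _ _ (by omega)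
  have hq : IsPeriod (frag T (i + x) (i + x + y - 1)) q := minPeriod_isPeriod hF2ne
  set p := minPeriod P with hpdef
  have hp : IsPeriod P p := minPeriod_isPeriod hP
  have hq0 : 0 < q := hq.1
  have hp0 : 0 < p := hp.1
  have hPlen : y < P.length := by omega
  have hPlen2 : P.length ≤ 2 * x + y := by omega
  have hpy : 16 * p ≤ 5 * y := by omega
  have hpq : p + q ≤ y := by omega
  -- `p` is a period of `F2`
  have hpF2 : IsPeriod (frag T (i + x) (i + x + y - 1)) p := by
    refine ⟨hp0, ?_⟩
    intro j hj
    rw [hF2len] at hj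
    rw [hF2chr j (by omega), hF2chr (j + p) hj]
    have e1 : T[i + x + j]? = P[(i + x - s) + j]? := by
      rw [hPT _ (by omega)]; congr 1; omega
    have e2 : T[i + x + (j + p)]? = P[(i + x - s) + j + p]? := by
      rw [hPT _ (by omega)]; congr 1; omega
    rw [e1, e2]
    exact hp.2 _ (by omega)
  have hqp : q ≤ p := minPeriod_le hpF2
  set d := i + x - s with hddef
  have hdy : d + y < P.length := by omega
  -- `q` is a period of `P`
  have hqP : IsPeriod P q := by
    refine ⟨hq0, ?_⟩
    intro j hj
    set t := d + (j + (p - d % p)) % p with htdef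
    have htlb : d ≤ t := Nat.le_add_right _ _
    have hmlt : (j + (p - d % p)) % p < p := Nat.mod_lt _ hp0
    have htub : t ≤ d + p - 1 := by omega
    have h2 : d + (p - d % p) = p * (d / p) + p := by
      have h3 := Nat.mod_add_div d p
      have h4 : d % p < p := Nat.mod_lt d hp0
      set A := d % p with hA
      set B := p * (d / p) with hB
      omega
    have hmod : t % p = j % p := by
      calc t % p = (d + (j + (p - d % p))) % p := by rw [htdef, Nat.add_mod_mod]
      _ = (j + (d + (p - d % p))) % p := by rw [Nat.add_left_comm]
      _ = (j + (p * (d / p) + p)) % p := by rw [h2]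
      _ = (j + p * (d / p + 1)) % p := by rw [Nat.mul_add, Nat.mul_one]
      _ = j % p := Nat.add_mul_mod_self_left j p (d / p + 1)
    have htq : t + q < d + y := by omega
    have h1 : P[j]? = P[t]? := by
      rcases le_total j t with h | h
      · exact period_mod hp h (by omega) (by rw [hmod])
      · exact (period_mod hp h (by omega) hmod).symm
    have hmodq : (j + q) % p = (t + q) % p := by
      rw [Nat.add_mod j q, ← hmod, ← Nat.add_mod]
    have h2' : P[j + q]? = P[t + q]? := by
      rcases le_total (j + q) (t + q) with h | h
      · exact period_mod hp h (by omega) hmodq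
      · exact (period_mod hp h (by omega) hmodq.symm).symm
    have h3 : P[t]? = P[t + q]? := by
      rw [hPT t (by omega), hPT (t + q) (by omega)]
      have f1 : T[s + t]? = (frag T (i + x) (i + x + y - 1))[t - d]? := by
        rw [hF2chr (t - d) (by omega)]; congr 1; omega
      have f2 : T[s + (t + q)]? = (frag T (i + x) (i + x + y - 1))[t - d + q]? := by
        rw [hF2chr (t - d + q) (by omega)]; congr 1; omega
      rw [f1, f2]
      exact hq.2 (t - d) (by rw [hF2len]; omega)
    rw [h1, h3, ← h2']
  have hpq2 : p ≤ q := minPeriod_le hqP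
  have hpeq : p = q := le_antisymm hpq2 hqp
  -- T has period q on [s, s + P.length)
  have heT : s + P.length ≤ T.length := by omega
  have hTper : ∀ j, s ≤ j → j + q < s + P.length → T[j]? = T[j + q]? := by
    intro j h1 h2
    have e1 : T[j]? = P[j - s]? := by rw [hPT (j - s) (by omega)]; congr 1; omega
    have e2 : T[j + q]? = P[j - s + q]? := by rw [hPT (j - s + q) (by omega)]; congr 1; omega
    rw [e1, e2]
    exact hqP.2 (j - s) (by omega)
  -- extend maximally to the left
  set A : Set ℕ := {a' | ∀ j, a' ≤ j → j + q < s + P.length → T[j]? = T[j + q]?} with hAdef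
  have hsA : s ∈ A := hTper
  set a := sInf A with hadef
  have haA : a ∈ A := Nat.sInf_mem ⟨s, hsA⟩
  have has : a ≤ s := Nat.sInf_le hsA
  have hleft : a = 0 ∨ T[a - 1]? ≠ T[a - 1 + q]? := by
    by_cases h0 : a = 0
    · left; exact h0
    · right
      have hnot : a - 1 ∉ A := fun hmem => absurd (Nat.sInf_le hmem) (by omega)
      intro heq
      apply hnot
      intro j hj hje
      rcases eq_or_lt_of_le hj with h | h
      · rw [← h]; exact heq
      · exact haA j (by omega) hje
  -- extend maximally to the right
  set M : Set ℕ := {m | m ≤ T.length ∧ ∀ j, a ≤ j → j + q < m → T[j]? = T[j + q]?} with hMdef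
  have heM : s + P.length ∈ M := ⟨heT, fun j hj hje => haA j hj hje⟩
  have hbdd : BddAbove M := ⟨T.length, fun m hm => hm.1⟩
  set m := sSup M with hmdef
  have hmM : m ∈ M := Nat.sSup_mem ⟨_, heM⟩ hbdd
  have hem : s + P.length ≤ m := le_csSup hbdd heM
  have hmT : m ≤ T.length := hmM.1
  have hqm : q ≤ m := by omega
  have hright : m = T.length ∨ T[m]? ≠ T[m - q]? := by
    by_cases h0 : m = T.length
    · left; exact h0
    · right
      have hnotM : m + 1 ∉ M := fun hmem => absurd (le_csSup hbdd hmem) (by omega)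
      intro heq
      apply hnotM
      refine ⟨by omega, fun j hj hje => ?_⟩
      rcases lt_or_eq_of_le (Nat.lt_succ_iff.1 hje) with h | h
      · exact hmM.2 j hj h
      · have hjq : j = m - q := by omega
        rw [hjq, show m - q + q = m by omega]
        exact heq.symm
  set b := m - 1 with hbdef
  have hb1 : b + 1 = m := by omega
  have hbT : b < T.length := by omega
  have hab : a ≤ b := by omega
  have hfl : (frag T a b).length = m - a := by rw [frag_length T a b hbT hab]; omega
  have hfchr : ∀ k, k < m - a → (frag T a b)[k]? = T[a + k]? := fun k hk =>
    frag_getElem? T a b k (by omega)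
  have hfne : frag T a b ≠ [] := by
    intro h; rw [h] at hfl; simp at hfl; omega
  have hqfrag : IsPeriod (frag T a b) q := by
    refine ⟨hq0, ?_⟩
    intro j hj
    rw [hfl] at hj
    rw [hfchr j (by omega), hfchr (j + q) hj]
    have hthis := hmM.2 (a + j) (by omega) (by omega)
    rw [show a + (j + q) = a + j + q by omega]
    exact hthis
  set r := minPeriod (frag T a b) with hrdef
  have hrq : r ≤ q := minPeriod_le hqfrag
  have hrper : IsPeriod (frag T a b) r := minPeriod_isPeriod hfne
  have hrF2 : IsPeriod (frag T (i + x) (i + x + y - 1)) r := by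
    refine ⟨hrper.1, ?_⟩
    intro j hj
    rw [hF2len] at hj
    rw [hF2chr j (by omega), hF2chr (j + r) hj]
    have hrqy : r ≤ q := hrq
    have e1 : T[i + x + j]? = (frag T a b)[i + x + j - a]? := by
      rw [hfchr _ (by omega)]; congr 1; omega
    have e2 : T[i + x + (j + r)]? = (frag T a b)[i + x + j - a + r]? := by
      rw [hfchr _ (by omega)]; congr 1; omega
    rw [e1, e2]
    exact hrper.2 _ (by rw [hfl]; omega)
  have hqr : q ≤ r := minPeriod_le hrF2
  have hreq : r = q := le_antisymm hrq hqr
  refine ⟨hpeq, a, b, ⟨hab, hbT, ?_, ?_, ?_⟩, hreq, by omega, by omega, has, by omega⟩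
  · rw [← hrdef, hreq]; omega
  · rw [← hrdef, hreq]; exact hleft
  · rw [← hrdef, hreq, hb1]; exact hright
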